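/- The stationary point of g(τ_c) = (τ - Nτ_c)·(A·p_d·[M - βσ²(N-1)/(βNp_cτ_c + σ²(K+1))] + B) - Nτ_c·p_c in τ_c equals τ_c* = (√((p_cτ + σ²(K+1)/β)·σ²(N-1)/(M + (B + p_c)/(A·p_d))) - σ²(K+1)/β)/(N·p_c). -/

import Mathlib

/-- The stationary point of
`g(τ_c) = (τ - Nτ_c)(A p_d [M - βσ²(N-1)/(βN p_c τ_c + σ²(K+1))] + B) - Nτ_c p_c`
is `τ_c* = (√((p_c τ + σ²(K+1)/β) σ²(N-1)/(M + (B+p_c)/(A p_d))) - σ²(K+1)/β)/(N p_c)`. -/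
theorem stored_energy_stationary_time (A B pd pc β σ2 τ K M : ℝ) (N : ℕ)
    (hA : 0 < A) (hpd : 0 < pd) (hpc : 0 < pc) (hβ : 0 < β) (hσ : 0 < σ2)
    (hτ : 0 < τ) (hK : 0 ≤ K) (hN : 2 ≤ N)
    (hM : 0 < M + (B + pc) / (A * pd))
    (hmem : (Real.sqrt ((pc * τ + σ2 * (K + 1) / β) * σ2 * (N - 1)
          / (M + (B + pc) / (A * pd))) - σ2 * (K + 1) / β) / (N * pc)
        ∈ Set.Ioo 0 (τ / N)) :
    deriv (fun τc : ℝ => (τ - N * τc) * (A * pd * (M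
        - β * σ2 * (N - 1) / (β * N * pc * τc + σ2 * (K + 1))) + B) - N * τc * pc)
      ((Real.sqrt ((pc * τ + σ2 * (K + 1) / β) * σ2 * (N - 1)
          / (M + (B + pc) / (A * pd))) - σ2 * (K + 1) / β) / (N * pc))
      = 0 := by
  obtain ⟨ht0, htτ⟩ := hmem
  have hN1 : (1:ℝ) < (N:ℝ) := by exact_mod_cast Nat.lt_of_lt_of_le one_lt_two hN
  have hNpos : (0:ℝ) < (N:ℝ) := lt_trans one_pos hN1
  set s : ℝ := Real.sqrt ((pc * τ + σ2 * (K + 1) / β) * σ2 * (N - 1)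
          / (M + (B + pc) / (A * pd))) with hsdef
  set t : ℝ := (s - σ2 * (K + 1) / β) / (N * pc) with htdef
  have hsdiff : 0 < s - σ2 * (K + 1) / β := by
    rcases div_pos_iff.mp (htdef ▸ ht0) with ⟨h, _⟩ | ⟨_, h⟩
    · exact h
    · nlinarith [mul_pos hNpos hpc]
  have hspos : 0 < s := by
    have h0 : 0 < σ2 * (K + 1) / β := by positivity
    linarith
  have hargpos : 0 ≤ (pc * τ + σ2 * (K + 1) / β) * σ2 * ((N:ℝ) - 1)
          / (M + (B + pc) / (A * pd)) := by
    have h1 : (0:ℝ) < (N:ℝ) - 1 := by linarith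
    positivity
  have hs2 : s ^ 2 = (pc * τ + σ2 * (K + 1) / β) * σ2 * ((N:ℝ) - 1)
          / (M + (B + pc) / (A * pd)) := Real.sq_sqrt hargpos
  have hD : β * N * pc * t + σ2 * (K + 1) = β * s := by
    rw [htdef]; field_simp; ring
  have hDne : β * (N:ℝ) * pc * t + σ2 * (K + 1) ≠ 0 := by rw [hD]; positivity
  -- derivative construction
  have hden : HasDerivAt (fun τc : ℝ => β * N * pc * τc + σ2 * (K + 1)) (β * N * pc) t := by
    simpa using ((hasDerivAt_id t).const_mul (β * N * pc)).add_const (σ2 * (K + 1))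
  have hfrac : HasDerivAt (fun τc : ℝ => β * σ2 * ((N:ℝ) - 1) / (β * N * pc * τc + σ2 * (K + 1)))
      (β * σ2 * ((N:ℝ) - 1) * (-(β * N * pc) / (β * N * pc * t + σ2 * (K + 1)) ^ 2)) t := by
    simpa [div_eq_mul_inv] using (hden.inv hDne).const_mul (β * σ2 * ((N:ℝ) - 1))
  have hg : HasDerivAt (fun τc : ℝ => A * pd * (M
      - β * σ2 * ((N:ℝ) - 1) / (β * N * pc * τc + σ2 * (K + 1))) + B)
      (A * pd * (0 - β * σ2 * ((N:ℝ) - 1) * (-(β * N * pc) / (β * N * pc * t + σ2 * (K + 1)) ^ 2))) t :=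
    (((hasDerivAt_const t M).sub hfrac).const_mul (A * pd)).add_const B
  have hf : HasDerivAt (fun τc : ℝ => τ - (N:ℝ) * τc) (0 - (N:ℝ) * 1) t :=
    (hasDerivAt_const t τ).sub ((hasDerivAt_id t).const_mul (N:ℝ))
  have hlast : HasDerivAt (fun τc : ℝ => (N:ℝ) * τc * pc) ((N:ℝ) * 1 * pc) t :=
    (((hasDerivAt_id t).const_mul (N:ℝ)).mul_const pc)
  have H : HasDerivAt (fun τc : ℝ => (τ - N * τc) * (A * pd * (M
      - β * σ2 * (N - 1) / (β * N * pc * τc + σ2 * (K + 1))) + B) - N * τc * pc) _ t :=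
    ((hf.mul hg).sub hlast)
  rw [H.deriv]
  -- now algebra
  rw [hD] at *
  have hPne : M + (B + pc) / (A * pd) ≠ 0 := ne_of_gt hM
  have hτNt : τ - (N:ℝ) * t = (pc * τ + σ2 * (K + 1) / β - s) / pc := by
    rw [htdef]; field_simp; ring
  rw [hτNt]
  have hβne := hβ.ne'
  have hsne := hspos.ne'
  have hpcne := hpc.ne'
  have hApd : A * pd ≠ 0 := by positivity
  have hsum : (0:ℝ) < A * pd * M + B + pc := by
    have h := mul_pos (mul_pos hA hpd) hM
    have he : A * pd * (M + (B + pc) / (A * pd)) = A * pd * M + B + pc := by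
      field_simp; ring
    linarith [he ▸ h]
  have key : (A * pd * M + B + pc) * β * s ^ 2
      = (pc * τ * β + σ2 * (K + 1)) * (σ2 * ((N:ℝ) - 1)) * (A * pd) := by
    rw [eq_div_iff hPne] at hs2
    have hApdne : A * pd ≠ 0 := by positivity
    field_simp at hs2
    linear_combination hs2
  field_simp
  linear_combination (-(N:ℝ) * pc) * key
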